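/- Let a ≥ 0, b ≥ 0 and γ₁ > γ₂ > 0. If w₁ ∈ (0, 1] is a global minimizer over (0, 1] of w ↦ w(1 − w)·a + w²·b − (γ₁/2)·ln w, and w₂ ∈ (0, 1] is a global minimizer over (0, 1] of w ↦ w(1 − w)·a + w²·b − (γ₂/2)·ln w, then w₁ ≥ w₂. That is, the optimal weight placed on the AI prior mean is nondecreasing in the interaction-cost parameter γ; consequently, the societal bias inherited from a biased AI increases with the cost of human–AI interactions. -/
import Mathlib

/-- The optimal weight on the AI prior mean is nondecreasing in the
interaction-cost parameter: if `γ₁ > γ₂ > 0` and `wᵢ ∈ (0, 1]` globally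
minimizes `w(1 − w)a + w²b − (γᵢ/2)·ln w` over `(0, 1]`, then `w₁ ≥ w₂`. -/
theorem optimal_weight_monotone_in_cost (a b γ₁ γ₂ w₁ w₂ : ℝ)
    (ha : 0 ≤ a) (hb : 0 ≤ b) (hγ : γ₁ > γ₂) (hγ₂ : 0 < γ₂)
    (hw₁ : w₁ ∈ Set.Ioc (0 : ℝ) 1) (hw₂ : w₂ ∈ Set.Ioc (0 : ℝ) 1)
    (hmin₁ : ∀ w ∈ Set.Ioc (0 : ℝ) 1,
      w₁ * (1 - w₁) * a + w₁ ^ 2 * b - γ₁ / 2 * Real.log w₁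
        ≤ w * (1 - w) * a + w ^ 2 * b - γ₁ / 2 * Real.log w)
    (hmin₂ : ∀ w ∈ Set.Ioc (0 : ℝ) 1,
      w₂ * (1 - w₂) * a + w₂ ^ 2 * b - γ₂ / 2 * Real.log w₂
        ≤ w * (1 - w) * a + w ^ 2 * b - γ₂ / 2 * Real.log w) :
    w₂ ≤ w₁ := by
  have h1 := hmin₁ w₂ hw₂
  have h2 := hmin₂ w₁ hw₁
  have hlog : Real.log w₂ ≤ Real.log w₁ := by nlinarith [hγ]
  exact (Real.log_le_log_iff hw₂.1 hw₁.1).mp hlog
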